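/- If the partial losses ℓ₊ and ℓ₋ are convex on [−1,1], then the potential well Ψ is convex on ℝ (condition (A) of Lemma 2.1). -/

import Mathlib

open scoped BigOperators

noncomputable def Psi (lp lm Γinv : ℝ → ℝ) (m : ℝ) : ℝ :=
  if m ≤ lm (-1) - lp (-1) then -m + 2 * lm (-1)
  else if m < lm 1 - lp 1 then lp (Γinv m) + lm (Γinv m)
  else m + 2 * lp 1

/-- Derivative of a function monotone on `Icc (-1) 1` is nonneg at interior points. -/
lemma aux_deriv_nonneg (f : ℝ → ℝ) (f'x x : ℝ)
    (hf : MonotoneOn f (Set.Icc (-1) 1)) (hx : x ∈ Set.Ioo (-1:ℝ) 1)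
    (hd : HasDerivAt f f'x x) : 0 ≤ f'x := by
  have ht : Filter.Tendsto (slope f x) (nhdsWithin x (Set.Ioi x)) (nhds f'x) :=
    (hasDerivAt_iff_tendsto_slope.mp hd).mono_left
      (nhdsWithin_mono x (by intro y hy; exact ne_of_gt hy))
  refine ge_of_tendsto ht ?_
  filter_upwards [Ioo_mem_nhdsGT_of_mem ⟨le_refl x, hx.2⟩] with u hu
  rw [slope_def_field]
  have : f x ≤ f u := hf ⟨hx.1.le, hx.2.le⟩ ⟨le_trans hx.1.le hu.1.le, hu.2.le⟩ hu.1.le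
  apply div_nonneg <;> linarith [hu.1]

/-- A convex function on `Icc (-1) 1` with zero derivative at an interior point
attains its minimum there. -/
lemma aux_min_of_deriv_zero (f : ℝ → ℝ) (x : ℝ)
    (hf : ConvexOn ℝ (Set.Icc (-1:ℝ) 1) f) (hx : x ∈ Set.Ioo (-1:ℝ) 1)
    (hd : HasDerivAt f 0 x) : ∀ g ∈ Set.Icc (-1:ℝ) 1, f x ≤ f g := by
  intro g hg
  have hxm : x ∈ Set.Icc (-1:ℝ) 1 := ⟨hx.1.le, hx.2.le⟩
  rcases lt_trichotomy g x with hlt | rfl | hgt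
  · have ht : Filter.Tendsto (slope f x) (nhdsWithin x (Set.Iio x)) (nhds 0) :=
      (hasDerivAt_iff_tendsto_slope.mp hd).mono_left
        (nhdsWithin_mono x (by intro y hy; exact ne_of_lt hy))
    have hsl : (f g - f x) / (g - x) ≤ 0 := by
      refine ge_of_tendsto ht ?_
      filter_upwards [Ioo_mem_nhdsLT_of_mem ⟨hlt, le_refl x⟩] with u hu
      rw [slope_def_field]
      have hum : u ∈ Set.Icc (-1:ℝ) 1 := ⟨le_trans hg.1 hu.1.le, le_trans hu.2.le hx.2.le⟩
      exact hf.secant_mono hxm hg hum (ne_of_lt hlt) (ne_of_lt hu.2) hu.1.le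
    by_contra hcon
    push_neg at hcon
    have : 0 < (f g - f x) / (g - x) :=
      div_pos_of_neg_of_neg (by linarith) (by linarith)
    linarith
  · exact le_refl _
  · have ht : Filter.Tendsto (slope f x) (nhdsWithin x (Set.Ioi x)) (nhds 0) :=
      (hasDerivAt_iff_tendsto_slope.mp hd).mono_left
        (nhdsWithin_mono x (by intro y hy; exact ne_of_gt hy))
    have hsl : 0 ≤ (f g - f x) / (g - x) := by
      refine le_of_tendsto ht ?_
      filter_upwards [Ioo_mem_nhdsGT_of_mem ⟨le_refl x, hgt⟩] with u hu
      rw [slope_def_field]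
      have hum : u ∈ Set.Icc (-1:ℝ) 1 := ⟨le_trans hx.1.le hu.1.le, le_trans hu.2.le hg.2⟩
      exact hf.secant_mono hxm hum hg (ne_of_gt hu.1) (ne_of_gt hgt) hu.2.le
    by_contra hcon
    push_neg at hcon
    have : (f g - f x) / (g - x) < 0 :=
      div_neg_of_neg_of_pos (by linarith) (by linarith)
    linarith

theorem stmt_1
    (lp lm lp' lm' lp'' lm'' Γinv : ℝ → ℝ)
    (hlpc : ContinuousOn lp (Set.Icc (-1) 1))
    (hlmc : ContinuousOn lm (Set.Icc (-1) 1))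
    (hlpd : ∀ x ∈ Set.Ioo (-1:ℝ) 1, HasDerivAt lp (lp' x) x)
    (hlmd : ∀ x ∈ Set.Ioo (-1:ℝ) 1, HasDerivAt lm (lm' x) x)
    (hlpd2 : ∀ x ∈ Set.Ioo (-1:ℝ) 1, HasDerivAt lp' (lp'' x) x)
    (hlmd2 : ∀ x ∈ Set.Ioo (-1:ℝ) 1, HasDerivAt lm' (lm'' x) x)
    (hlpm : AntitoneOn lp (Set.Icc (-1) 1))
    (hlmm : MonotoneOn lm (Set.Icc (-1) 1))
    (hslope : ∀ x ∈ Set.Ioo (-1:ℝ) 1, 0 < lm' x - lp' x)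
    (hGinvMem : ∀ m ∈ Set.Icc (lm (-1) - lp (-1)) (lm 1 - lp 1), Γinv m ∈ Set.Icc (-1:ℝ) 1)
    (hGinvRight : ∀ m ∈ Set.Icc (lm (-1) - lp (-1)) (lm 1 - lp 1), lm (Γinv m) - lp (Γinv m) = m)
    (hGinvLeft : ∀ g ∈ Set.Icc (-1:ℝ) 1, Γinv (lm g - lp g) = g)
    (hlpcvx : ConvexOn ℝ (Set.Icc (-1:ℝ) 1) lp)
    (hlmcvx : ConvexOn ℝ (Set.Icc (-1:ℝ) 1) lm) :
    ConvexOn ℝ Set.univ (Psi lp lm Γinv) := by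
  set Γa : ℝ := lm (-1) - lp (-1) with hΓa
  set Γb : ℝ := lm 1 - lp 1 with hΓb
  have hmem1 : (-1:ℝ) ∈ Set.Icc (-1:ℝ) 1 := by norm_num
  have hmem2 : (1:ℝ) ∈ Set.Icc (-1:ℝ) 1 := by norm_num
  have hlm_le : lm (-1) ≤ lm 1 := hlmm hmem1 hmem2 (by norm_num)
  have hlp_le : lp 1 ≤ lp (-1) := hlpm hmem1 hmem2 (by norm_num)
  have hΓab : Γa ≤ Γb := by simp only [hΓa, hΓb]; linarith
  -- subgradient existence
  have key : ∀ m : ℝ, ∃ t ∈ Set.Icc (-1:ℝ) 1,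
      ∀ m' : ℝ, Psi lp lm Γinv m + t * (m' - m) ≤ Psi lp lm Γinv m' := by
    intro m
    by_cases h1 : m ≤ Γa
    · refine ⟨-1, by norm_num, fun m' => ?_⟩
      have hΨm : Psi lp lm Γinv m = -m + 2 * lm (-1) := by simp only [Psi]; exact if_pos h1
      rw [hΨm]
      unfold Psi
      split_ifs with h1' h2'
      · ring_nf; linarith
      · have hm' : m' ∈ Set.Icc Γa Γb := ⟨le_of_not_ge h1', h2'.le⟩
        have hg := hGinvMem m' hm'
        have : lm (-1) ≤ lm (Γinv m') := hlmm hmem1 hg hg.1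
        have := hGinvRight m' hm'
        nlinarith
      · have : Γb ≤ m' := le_of_not_gt h2'
        nlinarith
    · by_cases h2 : m < Γb
      · -- middle case
        push_neg at h1
        have hmm : m ∈ Set.Icc Γa Γb := ⟨h1.le, h2.le⟩
        set g₀ : ℝ := Γinv m with hg₀
        have hg₀mem : g₀ ∈ Set.Icc (-1:ℝ) 1 := hGinvMem m hmm
        have hg₀eq : lm g₀ - lp g₀ = m := hGinvRight m hmm
        have hg₀Ioo : g₀ ∈ Set.Ioo (-1:ℝ) 1 := by
          constructor
          · rcases lt_or_eq_of_le hg₀mem.1 with h | h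
            · linarith
            · exfalso; rw [← h] at hg₀eq; rw [hΓa] at h1; linarith
          · rcases lt_or_eq_of_le hg₀mem.2 with h | h
            · exact h
            · exfalso; rw [h] at hg₀eq; rw [hΓb] at h2; linarith
        have hD : 0 < lm' g₀ - lp' g₀ := hslope g₀ hg₀Ioo
        have hlp'le : lp' g₀ ≤ 0 := by
          have := aux_deriv_nonneg (fun x => -lp x) (-(lp' g₀)) g₀
            (by intro a ha b hb hab; simp only [neg_le_neg_iff]; exact hlpm ha hb hab)
            hg₀Ioo ((hlpd g₀ hg₀Ioo).neg)
          linarith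
        have hlm'ge : 0 ≤ lm' g₀ := aux_deriv_nonneg lm (lm' g₀) g₀ hlmm hg₀Ioo (hlmd g₀ hg₀Ioo)
        set t : ℝ := (lm' g₀ + lp' g₀) / (lm' g₀ - lp' g₀) with hT
        have ht1 : t ≤ 1 := by
          rw [hT, div_le_one hD]; linarith
        have ht2 : -1 ≤ t := by
          rw [hT, le_div_iff₀ hD]; linarith
        -- φ := (1-t) * lm + (1+t) * lp  is convex with zero derivative at g₀
        set φ : ℝ → ℝ := fun g => (1 - t) * lm g + (1 + t) * lp g with hφ
        have hφcvx : ConvexOn ℝ (Set.Icc (-1:ℝ) 1) φ := by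
          constructor
          · exact convex_Icc _ _
          · intro x hx y hy a b ha hb hab
            have hL := hlmcvx.2 hx hy ha hb hab
            have hP := hlpcvx.2 hx hy ha hb hab
            simp only [smul_eq_mul] at hL hP ⊢
            have h1t : (0:ℝ) ≤ 1 - t := by linarith
            have h2t : (0:ℝ) ≤ 1 + t := by linarith
            simp only [hφ]
            nlinarith [mul_le_mul_of_nonneg_left hL h1t, mul_le_mul_of_nonneg_left hP h2t]
        have hφd : HasDerivAt φ 0 g₀ := by
          have := ((hlmd g₀ hg₀Ioo).const_mul (1 - t)).add ((hlpd g₀ hg₀Ioo).const_mul (1 + t))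
          have heq : (1 - t) * lm' g₀ + (1 + t) * lp' g₀ = 0 := by
            rw [hT]; field_simp; ring
          rw [heq] at this
          exact this
        have hφmin : ∀ g ∈ Set.Icc (-1:ℝ) 1, φ g₀ ≤ φ g :=
          aux_min_of_deriv_zero φ g₀ hφcvx hg₀Ioo hφd
        refine ⟨t, ⟨ht2, ht1⟩, fun m' => ?_⟩
        have hΨm : Psi lp lm Γinv m = lp g₀ + lm g₀ := by
          simp only [Psi, hg₀]
          rw [if_neg (by rw [← hΓa]; linarith), if_pos (by rw [← hΓb]; exact h2)]
        rw [hΨm]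
        unfold Psi
        split_ifs with h1' h2'
        · -- m' ≤ Γa
          have hφ1 := hφmin (-1) hmem1
          simp only [hφ] at hφ1
          rw [← hΓa] at h1'
          nlinarith [mul_le_mul_of_nonneg_left h1' (by linarith : (0:ℝ) ≤ 1 + t)]
        · -- middle
          have hm' : m' ∈ Set.Icc Γa Γb := ⟨le_of_not_ge (by rw [hΓa]; exact h1'), by rw [hΓb]; exact h2'.le⟩
          have hgmem := hGinvMem m' hm'
          have hgeq := hGinvRight m' hm'
          have hφg := hφmin (Γinv m') hgmem
          simp only [hφ] at hφg
          nlinarith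
        · -- m' ≥ Γb
          have hφ1 := hφmin 1 hmem2
          simp only [hφ] at hφ1
          have hm'ge : Γb ≤ m' := by rw [hΓb]; exact le_of_not_gt h2'
          nlinarith [mul_le_mul_of_nonneg_left hm'ge (by linarith : (0:ℝ) ≤ 1 - t)]
      · -- m ≥ Γb
        push_neg at h2
        refine ⟨1, by norm_num, fun m' => ?_⟩
        have hΨm : Psi lp lm Γinv m = m + 2 * lp 1 := by
          simp only [Psi]
          rw [if_neg (by rw [← hΓa]; exact h1), if_neg (by rw [← hΓb]; exact not_lt.mpr h2)]
        rw [hΨm]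
        unfold Psi
        split_ifs with h1' h2'
        · rw [← hΓa] at h1'; nlinarith
        · have hm' : m' ∈ Set.Icc Γa Γb := ⟨le_of_not_ge (by rw [hΓa]; exact h1'), by rw [hΓb]; exact h2'.le⟩
          have hgmem := hGinvMem m' hm'
          have hgeq := hGinvRight m' hm'
          have : lp 1 ≤ lp (Γinv m') := hlpm hgmem hmem2 hgmem.2
          nlinarith
        · linarith
  -- conclude convexity from subgradients
  refine ⟨convex_univ, fun x _ y _ a b ha hb hab => ?_⟩
  obtain ⟨t, _, hsub⟩ := key (a * x + b * y)
  have hx' := hsub x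
  have hy' := hsub y
  simp only [smul_eq_mul]
  set P := Psi lp lm Γinv (a * x + b * y) with hP
  have hzero : a * (t * (x - (a * x + b * y))) + b * (t * (y - (a * x + b * y))) = 0 := by
    linear_combination (-(a * x + b * y)) * t * hab
  have hPP : a * P + b * P = P := by linear_combination P * hab
  nlinarith [mul_le_mul_of_nonneg_left hx' ha, mul_le_mul_of_nonneg_left hy' hb]
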